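/- Let n = 4k with k a positive even integer and let 0 < ε ≤ 1/(2n). For σ ∈ {-1,+1}^k, define F_σ : {1,...,n} → ℝ by F_σ(i) = i/n for i even, or i ≤ k, or i ≥ 3k, and F_σ(i) = i/n + σ_{(i-k+1)/2}·α_i·ε otherwise, where α_i = 2 - 4·|i/n - 1/2|. Then F_σ is strictly increasing on {1,...,n}, F_σ(n) = 1, and F_σ(i) ∈ [0,1] for all i; hence F_σ is the CDF of a probability distribution on {1,...,n}. -/

import Mathlib

/-- The family of CDFs `F_σ` used in the median-estimation lower bound: for `n = 4k`
with `k` positive and even, `0 < ε ≤ 1/(2n)` and signs `σ`, the function `F_σ` is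
strictly increasing on `{1,...,n}`, has `F_σ(n) = 1`, and takes values in `[0,1]`. -/
theorem stmt_10 (k : ℕ) (hk : 0 < k) (hke : Even k) (ε : ℝ) (hε : 0 < ε)
    (hε2 : ε ≤ 1 / (2 * (4 * k : ℝ))) (σ : ℕ → ℝ) (hσ : ∀ j, σ j = 1 ∨ σ j = -1) :
    let n : ℕ := 4 * k
    let α : ℕ → ℝ := fun i => 2 - 4 * |(i : ℝ) / n - 1 / 2|
    let F : ℕ → ℝ := fun i =>
      if i % 2 = 0 ∨ i ≤ k ∨ 3 * k ≤ i then (i : ℝ) / n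
      else (i : ℝ) / n + σ ((i - k + 1) / 2) * α i * ε
    StrictMonoOn F (Set.Icc 1 n) ∧ F n = 1 ∧ ∀ i ∈ Set.Icc 1 n, F i ∈ Set.Icc (0 : ℝ) 1 := by
  intro n α F
  have hkr : (1:ℝ) ≤ (k:ℝ) := by exact_mod_cast hk
  have hkpos : (0:ℝ) < (k:ℝ) := by linarith
  have hnr : (n:ℝ) = 4 * (k:ℝ) := by push_cast [n]; ring
  have hnpos : (0:ℝ) < (n:ℝ) := by rw [hnr]; linarith
  set B : ℝ := (2 - 4/(n:ℝ)) * ε with hBdef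
  have hε2' : ε * (8 * (k:ℝ)) ≤ 1 := by
    rw [le_div_iff₀ (by linarith : (0:ℝ) < 2 * (4 * (k:ℝ)))] at hε2
    linarith
  have hdk : (4/((n:ℝ))) * (k:ℝ) = 1 := by rw [hnr]; field_simp
  have hdpos : (0:ℝ) < 4/(n:ℝ) := by positivity
  have hB1 : B < 1/(n:ℝ) := by
    rw [hBdef, hnr, lt_div_iff₀ (by linarith : (0:ℝ) < 4*(k:ℝ))]
    rw [hnr] at hdk
    nlinarith
  have hBpos : 0 ≤ B := by
    rw [hBdef]
    have : 4/(n:ℝ) ≤ 1 := by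
      rw [div_le_one hnpos, hnr]; linarith
    nlinarith
  -- perturbation bound
  have hpert : ∀ i : ℕ, |F i - (i:ℝ)/(n:ℝ)| ≤ B := by
    intro i
    by_cases h : i % 2 = 0 ∨ i ≤ k ∨ 3 * k ≤ i
    · simp only [F, if_pos h]
      simpa using hBpos
    · push_neg at h
      obtain ⟨h1, h2, h3⟩ := h
      have hcond : ¬(i % 2 = 0 ∨ i ≤ k ∨ 3 * k ≤ i) := by omega
      simp only [F, if_neg hcond]
      have hσ1 : |σ ((i - k + 1) / 2)| = 1 := by
        rcases hσ ((i - k + 1) / 2) with h | h <;> simp [h]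
      have habs : |(i:ℝ)/(n:ℝ) + σ ((i - k + 1) / 2) * α i * ε - (i:ℝ)/(n:ℝ)| 
          = |α i| * ε := by
        rw [add_sub_cancel_left, abs_mul, abs_mul, hσ1, one_mul, abs_of_pos hε]
      rw [habs, hBdef]
      have hεle : 0 < ε := hε
      apply mul_le_mul_of_nonneg_right _ hε.le
      -- |α i| ≤ 2 - 4/n  since i odd (so i ≠ 2k) and k < i < 3k
      have hi2k : i ≠ 2 * k := by
        intro hc
        apply h1
        omega
      have hone : (1:ℝ) ≤ |(i:ℝ) - 2*(k:ℝ)| := by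
        have : ((i:ℤ) - 2*(k:ℤ)) ≠ 0 := by
          intro hc
          apply hi2k
          omega
        have h1le : (1:ℤ) ≤ |(i:ℤ) - 2*(k:ℤ)| := Int.one_le_abs this
        calc (1:ℝ) ≤ |((i:ℤ) - 2*(k:ℤ) : ℤ)| := by exact_mod_cast h1le
          _ = |(i:ℝ) - 2*(k:ℝ)| := by push_cast; ring_nf
      have heq : |(i:ℝ)/(n:ℝ) - 1/2| = |(i:ℝ) - 2*(k:ℝ)| / (n:ℝ) := by
        have hx : (i:ℝ)/(n:ℝ) - 1/2 = ((i:ℝ) - 2*(k:ℝ))/(n:ℝ) := by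
          rw [hnr]; field_simp; ring
        rw [hx, abs_div, abs_of_pos hnpos]
      have hlow : 1/(n:ℝ) ≤ |(i:ℝ)/(n:ℝ) - 1/2| := by
        rw [heq]
        gcongr
      have hup : |(i:ℝ)/(n:ℝ) - 1/2| ≤ 1/4 := by
        have hik : (k:ℝ) < (i:ℝ) := by exact_mod_cast h2
        have hik3 : (i:ℝ) < 3*(k:ℝ) := by exact_mod_cast h3
        rw [heq, hnr, div_le_iff₀ (by linarith : (0:ℝ) < 4*(k:ℝ)), abs_le]
        constructor <;> linarith
      simp only [α]
      rw [abs_le]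
      constructor
      · have : 4 * |(i:ℝ)/(n:ℝ) - 1/2| ≤ 1 := by linarith
        have h4n : 4/(n:ℝ) ≤ 1 := by rw [div_le_one hnpos, hnr]; linarith
        linarith
      · have h4 : 4/(n:ℝ) ≤ 4 * |(i:ℝ)/(n:ℝ) - 1/2| := by
          calc 4/(n:ℝ) = 4 * (1/(n:ℝ)) := by ring
            _ ≤ 4 * |(i:ℝ)/(n:ℝ) - 1/2| := by
                exact mul_le_mul_of_nonneg_left hlow (by norm_num)
        linarith
  have hF0 : ∀ i : ℕ, (i % 2 = 0 ∨ i ≤ k ∨ 3 * k ≤ i) → F i = (i:ℝ)/(n:ℝ) := by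
    intro i h
    simp only [F, if_pos h]
  have hmono : StrictMonoOn F (Set.Icc 1 n) := by
    intro i _ j _ hij
    have hpi := abs_le.1 (hpert i)
    have hpj := abs_le.1 (hpert j)
    rcases lt_or_ge (i+1) j with hg | hg
    · -- j ≥ i + 2
      have hij2 : (i:ℝ) + 2 ≤ (j:ℝ) := by exact_mod_cast hg
      have hdiv : (i:ℝ)/(n:ℝ) + 2/(n:ℝ) ≤ (j:ℝ)/(n:ℝ) := by
        rw [← add_div]
        gcongr
      have h2n : 2/(n:ℝ) = 1/(n:ℝ) + 1/(n:ℝ) := by ring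
      linarith [hpi.2, hpj.1, hB1]
    · -- j = i + 1
      have hj1 : j = i + 1 := by omega
      have hcast : (j:ℝ)/(n:ℝ) = (i:ℝ)/(n:ℝ) + 1/(n:ℝ) := by
        rw [hj1, ← add_div]; push_cast; ring
      rcases Nat.even_or_odd i with he | ho
      · have hFi : F i = (i:ℝ)/(n:ℝ) := hF0 i (Or.inl (Nat.even_iff.mp he))
        rw [hFi]
        linarith [hpj.1, hcast ▸ hpj.1]
      · have ho' := Nat.odd_iff.mp ho
        have hje : j % 2 = 0 := by omega
        have hFj : F j = (j:ℝ)/(n:ℝ) := hF0 j (Or.inl hje)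
        rw [hFj, hcast]
        linarith [hpi.2]
  have hn2 : n % 2 = 0 := by omega
  have hFn : F n = 1 := by
    rw [hF0 n (Or.inl hn2), div_self (ne_of_gt hnpos)]
  refine ⟨hmono, hFn, ?_⟩
  intro i hi
  have h1n : 1 ≤ n := by omega
  have hmem1 : (1:ℕ) ∈ Set.Icc 1 n := Set.mem_Icc.mpr ⟨le_refl 1, h1n⟩
  have hmemn : n ∈ Set.Icc 1 n := Set.mem_Icc.mpr ⟨h1n, le_refl n⟩
  have hF1 : F 1 = 1/(n:ℝ) := by
    have : (1:ℕ) ≤ k := hk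
    rw [hF0 1 (Or.inr (Or.inl this))]; norm_num
  have hmo := hmono.monotoneOn
  have hle1 : F 1 ≤ F i := hmo hmem1 hi (Set.mem_Icc.mp hi).1
  have hlen : F i ≤ F n := hmo hi hmemn (Set.mem_Icc.mp hi).2
  constructor
  · rw [hF1] at hle1
    have : 0 < 1/(n:ℝ) := by positivity
    linarith
  · rw [hFn] at hlen
    exact hlen
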